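/- Let 𝒜 be a finite list of elements in a finitely generated abelian group Γ with invariant factors d_{𝒮,1} | ⋯ | d_{𝒮,k_𝒮} of (Γ/⟨𝒮⟩)_tor for each sublist 𝒮, and set ρ_𝒜 = lcm{d_{𝒮,k_𝒮} : 𝒮 ⊂ 𝒜}. Then m(𝒮; ℤ/ρ_𝒜ℤ) = #(Γ/⟨𝒮⟩)_tor for every sublist 𝒮 ⊂ 𝒜, and consequently T_𝒜^{ℤ/ρ_𝒜ℤ}(x,y) = T_𝒜^{arith}(x,y). -/

import Mathlib

/-- Torsion subgroup of a quotient of a finitely generated abelian group is finite. -/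
theorem RhoAux.torsion_finite {Γ : Type*} [AddCommGroup Γ] [AddGroup.FG Γ] (X : Set Γ) :
    Finite (AddCommGroup.torsion (Γ ⧸ AddSubgroup.closure X)) := by
  set Q := Γ ⧸ AddSubgroup.closure X
  haveI : AddGroup.FG Q := by infer_instance
  haveI : Module.Finite ℤ Q := Module.Finite.iff_addGroup_fg.mpr ‹_›
  haveI : Finite (Submodule.torsion ℤ Q) := by
    haveI : Module.Finite ℤ (Submodule.torsion ℤ Q) := by infer_instance
    exact Module.finite_of_fg_torsion _ Submodule.torsion_isTorsion
  rw [← Submodule.torsion_int]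
  exact ‹Finite (Submodule.torsion ℤ Q)›

/-- The `d`-torsion of `ZMod ρ` has cardinality `d` when `d ∣ ρ`, `ρ ≠ 0`. -/
theorem RhoAux.card_dtorsion_zmod {ρ d : ℕ} (hρ : ρ ≠ 0) (hd : d ∣ ρ) :
    Nat.card {x : ZMod ρ // (d : ZMod ρ) * x = 0} = d := by
  haveI : NeZero ρ := ⟨hρ⟩
  have hd0 : d ≠ 0 := by rintro rfl; exact hρ (Nat.eq_zero_of_zero_dvd hd)
  let φ : ZMod ρ →+ ZMod ρ := AddMonoidHom.mulLeft (d : ZMod ρ)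
  have hker : Nat.card {x : ZMod ρ // (d : ZMod ρ) * x = 0} = Nat.card φ.ker := rfl
  have hrange : (AddMonoidHom.range φ) = AddSubgroup.zmultiples (d : ZMod ρ) := by
    ext x
    constructor
    · rintro ⟨y, rfl⟩
      refine ⟨(y.val : ℤ), ?_⟩
      show (y.val : ℤ) • (d : ZMod ρ) = φ y
      rw [zsmul_eq_mul]
      push_cast
      rw [ZMod.natCast_val, ZMod.cast_id]
      show y * d = φ y
      simp [φ, mul_comm]
    · rintro ⟨n, rfl⟩
      exact ⟨(n : ZMod ρ), by simp [φ, zsmul_eq_mul, mul_comm]⟩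
  have hcard_range : Nat.card (AddMonoidHom.range φ) = ρ / d := by
    rw [hrange, Nat.card_zmultiples, ZMod.addOrderOf_coe d hρ, Nat.gcd_eq_right hd]
  have h1 : Nat.card φ.ker * Nat.card (AddMonoidHom.range φ) = ρ := by
    rw [← Nat.card_congr (QuotientAddGroup.quotientKerEquivRange φ).toEquiv, mul_comm,
      ← AddSubgroup.card_eq_card_quotient_mul_card_addSubgroup φ.ker, Nat.card_zmod]
  rw [hcard_range] at h1
  have hdd : d * (ρ / d) = ρ := Nat.mul_div_cancel' hd
  have hρd : ρ / d ≠ 0 := by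
    intro h; rw [h, mul_zero] at hdd; exact hρ hdd.symm
  rw [hker]
  exact Nat.eq_of_mul_eq_mul_right (Nat.pos_of_ne_zero hρd) (h1.trans hdd.symm)

/-- `#Hom(ℤ/dℤ, ℤ/ρℤ) = d` when `d ∣ ρ`. -/
theorem RhoAux.card_hom_zmod_zmod {ρ d : ℕ} (hρ : ρ ≠ 0) (hd : d ∣ ρ) :
    Nat.card (ZMod d →+ ZMod ρ) = d := by
  have e1 : {f : ℤ →+ ZMod ρ // f d = 0} ≃ (ZMod d →+ ZMod ρ) := ZMod.lift d
  have e2 : {x : ZMod ρ // (d : ZMod ρ) * x = 0} ≃ {f : ℤ →+ ZMod ρ // f d = 0} :=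
    (Equiv.subtypeEquiv (zmultiplesHom (ZMod ρ)) (fun x => by
      rw [zmultiplesHom_apply, zsmul_eq_mul]
      push_cast
      rfl))
  rw [← Nat.card_congr (e2.trans e1)]
  exact RhoAux.card_dtorsion_zmod hρ hd

/-- For a finite abelian group `T` whose exponent divides `ρ ≠ 0`,
`#Hom(T, ℤ/ρℤ) = #T`. -/
theorem RhoAux.card_hom_eq_card (T : Type*) [AddCommGroup T] [Finite T] {ρ : ℕ} (hρ : ρ ≠ 0)
    (h : AddMonoid.exponent T ∣ ρ) : Nat.card (T →+ ZMod ρ) = Nat.card T := by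
  classical
  obtain ⟨κ, fκ, n, hn, ⟨e0⟩⟩ := AddCommGroup.equiv_directSum_zmod_of_finite' T
  let e : T ≃+ ((i : κ) → ZMod (n i)) := e0.trans (DirectSum.addEquivProd _)
  have hdvd : ∀ i, n i ∣ ρ := fun i => by
    refine dvd_trans ?_ h
    have h1 : addOrderOf (e.symm (Pi.single (M := fun j => ZMod (n j)) i 1)) =
        addOrderOf (Pi.single (M := fun j => ZMod (n j)) i 1) :=
      AddEquiv.addOrderOf_eq e.symm _
    have h2 : addOrderOf (Pi.single (M := fun j => ZMod (n j)) i 1) =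
        addOrderOf (1 : ZMod (n i)) :=
      addOrderOf_injective (AddMonoidHom.single (fun j => ZMod (n j)) i)
        (Pi.single_injective (M := fun j => ZMod (n j)) i) _
    have h3 := ZMod.addOrderOf_one (n i)
    rw [← h3, ← h2, ← h1]
    exact AddMonoid.addOrder_dvd_exponent _
  have e2 : (T →+ ZMod ρ) ≃ ((i : κ) → (ZMod (n i) →+ ZMod ρ)) :=
    ((AddEquiv.addMonoidHomCongrLeft (N := ZMod ρ) e).trans
      (Pi.addMonoidHomAddEquiv _ _)).toEquiv
  rw [Nat.card_congr e2, Nat.card_pi, Nat.card_congr e.toEquiv, Nat.card_pi]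
  exact Finset.prod_congr rfl fun i _ => by
    rw [RhoAux.card_hom_zmod_zmod hρ (hdvd i), Nat.card_zmod]

/-- The rank of the subgroup generated by a subset `X` of an abelian group `Γ`. -/
noncomputable def rk (Γ : Type*) [AddCommGroup Γ] (X : Set Γ) : ℕ :=
  Module.finrank ℤ (AddSubgroup.closure X)

/-- The `G`-multiplicity `m(X; G) = #Hom((Γ/⟨X⟩)_tor, G)`. -/
noncomputable def mult (Γ : Type*) [AddCommGroup Γ] (G : Type*) [AddCommGroup G]
    (X : Set Γ) : ℕ :=
  Nat.card ((AddCommGroup.torsion (Γ ⧸ AddSubgroup.closure X)) →+ G)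

/-- The `G`-Tutte polynomial, evaluated at integers `x, y`. -/
noncomputable def Tpoly {ι Γ : Type*} [AddCommGroup Γ] (G : Type*) [AddCommGroup G]
    (A : Finset ι) (a : ι → Γ) (x y : ℤ) : ℤ :=
  ∑ S ∈ A.powerset, (mult Γ G (a '' (S : Set ι)) : ℤ) *
    (x - 1) ^ (rk Γ (a '' (A : Set ι)) - rk Γ (a '' (S : Set ι))) *
    (y - 1) ^ (S.card - rk Γ (a '' (S : Set ι)))

/-- `ρ_𝒜`: the lcm over all sublists `𝒮 ⊆ 𝒜` of the last invariant factor of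
`(Γ/⟨𝒮⟩)_tor`, i.e. its exponent. -/
noncomputable def rho {ι : Type*} (Γ : Type*) [AddCommGroup Γ]
    (A : Finset ι) (a : ι → Γ) : ℕ :=
  A.powerset.lcm fun S =>
    AddMonoid.exponent (AddCommGroup.torsion (Γ ⧸ AddSubgroup.closure (a '' (S : Set ι))))

/-- `m(𝒮; ℤ/ρ_𝒜ℤ) = #(Γ/⟨𝒮⟩)_tor` for all `𝒮 ⊆ 𝒜`, and hence
`T_𝒜^{ℤ/ρ_𝒜ℤ}(x,y) = T_𝒜^{arith}(x,y)`. -/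
theorem zmod_rho_tutte_eq_arithmetic_tutte {ι Γ : Type*} [AddCommGroup Γ] [AddGroup.FG Γ]
    (A : Finset ι) (a : ι → Γ) :
    (∀ S ∈ A.powerset, mult Γ (ZMod (rho Γ A a)) (a '' (S : Set ι)) =
      Nat.card (AddCommGroup.torsion (Γ ⧸ AddSubgroup.closure (a '' (S : Set ι))))) ∧
    ∀ x y : ℤ, Tpoly (ZMod (rho Γ A a)) A a x y =
      ∑ S ∈ A.powerset,
        (Nat.card (AddCommGroup.torsion (Γ ⧸ AddSubgroup.closure (a '' (S : Set ι)))) : ℤ) *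
        (x - 1) ^ (rk Γ (a '' (A : Set ι)) - rk Γ (a '' (S : Set ι))) *
        (y - 1) ^ (S.card - rk Γ (a '' (S : Set ι))) := by
  haveI hfin : ∀ S : Finset ι,
      Finite (AddCommGroup.torsion (Γ ⧸ AddSubgroup.closure (a '' (S : Set ι)))) :=
    fun S => RhoAux.torsion_finite _
  have hρ : rho Γ A a ≠ 0 := by
    rw [rho, Ne, Finset.lcm_eq_zero_iff]
    rintro ⟨S, -, hS⟩
    exact AddMonoid.exponent_ne_zero_of_finite hS
  have key : ∀ S ∈ A.powerset, mult Γ (ZMod (rho Γ A a)) (a '' (S : Set ι)) =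
      Nat.card (AddCommGroup.torsion (Γ ⧸ AddSubgroup.closure (a '' (S : Set ι)))) := by
    intro S hS
    exact RhoAux.card_hom_eq_card _ hρ (Finset.dvd_lcm hS)
  refine ⟨key, fun x y => ?_⟩
  unfold Tpoly
  exact Finset.sum_congr rfl fun S hS => by rw [key S hS]
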